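/- arXiv:2505.08572 — 2 statements merged into one kernel-verified Lean document; each statement's English description precedes it below -/
import Mathlib

section
/- Let a > β > 0, and suppose a compact set W in a Banach space Y satisfies: every f ∈ W can be written f = Σ_{n=1}^∞ f_n with f_n in a subset A_n ⊆ Y whose entropy numbers satisfy ε_j(A_n, Y) ≤ C · 2^{-an} · (2^n / (j+1))^β for all j ≤ 2^{n+1} and ε_j(A_n, Y) ≤ C · 2^{-an} · 2^{-j/2^{n+1}} for j ≥ 2^{n+1}. Then there is a constant C' (depending only on a, β, C) such that ε_k(W, Y) ≤ C' k^{-a} for all k ≥ 1. -/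
open ENNReal Filter

/-- The `k`-th entropy number of a set `A` in a normed space `X`. -/
noncomputable def entropyNum {X : Type*} [SeminormedAddCommGroup X] (k : ℕ) (A : Set X) : ℝ≥0∞ :=
  ⨅ (ε : ℝ≥0∞) (_ : ∃ T : Finset X, T.card ≤ 2 ^ k ∧ ∀ a ∈ A, ∃ y ∈ T, edist a y ≤ ε), ε

section Aux

variable {X : Type*} [SeminormedAddCommGroup X]

lemma entropyNum_le' {k : ℕ} {A : Set X} {b : ℝ} (hb : 0 ≤ b)
    (h : ∃ T : Finset X, T.card ≤ 2 ^ k ∧ ∀ x ∈ A, ∃ y ∈ T, dist x y ≤ b) :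
    entropyNum k A ≤ ENNReal.ofReal b := by
  obtain ⟨T, hT, hcov⟩ := h
  refine iInf₂_le _ ⟨T, hT, fun x hx => ?_⟩
  obtain ⟨y, hy, hxy⟩ := hcov x hx
  exact ⟨y, hy, by rw [edist_dist]; exact ENNReal.ofReal_le_ofReal hxy⟩

lemma exists_cover {k : ℕ} {A : Set X} {b : ℝ} (hb : 0 < b)
    (h : entropyNum k A ≤ ENNReal.ofReal b) :
    ∃ T : Finset X, T.card ≤ 2 ^ k ∧ ∀ x ∈ A, ∃ y ∈ T, dist x y ≤ 2 * b := by
  have h2 : entropyNum k A < ENNReal.ofReal (2 * b) :=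
    lt_of_le_of_lt h ((ENNReal.ofReal_lt_ofReal_iff (by linarith)).2 (by linarith))
  rw [entropyNum, iInf_lt_iff] at h2
  obtain ⟨ε, hε⟩ := h2
  rw [iInf_lt_iff] at hε
  obtain ⟨⟨T, hT, hcov⟩, hlt⟩ := hε
  refine ⟨T, hT, fun x hx => ?_⟩
  obtain ⟨y, hy, hxy⟩ := hcov x hx
  refine ⟨y, hy, ?_⟩
  have h3 : edist x y ≤ ENNReal.ofReal (2 * b) := le_trans hxy hlt.le
  rw [edist_dist] at h3
  exact (ENNReal.ofReal_le_ofReal_iff (by linarith)).1 h3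

lemma two_pow_sum (m : ℕ) : (∑ n ∈ Finset.range m, 2 ^ n) + 1 = 2 ^ m := by
  induction m with
  | zero => simp
  | succ m ih =>
    rw [Finset.sum_range_succ]
    have : (2:ℕ) ^ (m + 1) = 2 * 2 ^ m := by ring
    omega

lemma sumNm (N : ℕ) : (∑ n ∈ Finset.range (N + 1), (N - n) * 2 ^ n) + (N + 2) = 2 ^ (N + 1) := by
  induction N with
  | zero => simp
  | succ N ih =>
    have h2 := two_pow_sum (N + 1)
    rw [Finset.sum_range_succ]
    have he : ∑ n ∈ Finset.range (N + 1), (N + 1 - n) * 2 ^ n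
        = ∑ n ∈ Finset.range (N + 1), ((N - n) * 2 ^ n + 2 ^ n) := by
      apply Finset.sum_congr rfl
      intro n hn
      have hn' : n ≤ N := Nat.lt_succ_iff.mp (Finset.mem_range.mp hn)
      have : N + 1 - n = (N - n) + 1 := by omega
      rw [this, add_mul, one_mul]
    rw [he, Finset.sum_add_distrib]
    have h3 : (2:ℕ) ^ (N + 2) = 2 * 2 ^ (N + 1) := by ring
    simp only [Nat.succ_sub_succ_eq_sub, Nat.sub_self, zero_mul, add_zero]
    omega

lemma geo_range {q : ℝ} (h0 : 0 ≤ q) (h1 : q < 1) (n : ℕ) :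
    ∑ i ∈ Finset.range n, q ^ i ≤ (1 - q)⁻¹ := by
  have h := geom_sum_Ico_le_of_lt_one h0 h1 (m := 0) (n := n)
  rw [Finset.range_eq_Ico]
  refine h.trans (le_of_eq ?_)
  rw [pow_zero, one_div]

lemma geo_Ioc {q : ℝ} (h0 : 0 ≤ q) (h1 : q < 1) (M K : ℕ) :
    ∑ n ∈ Finset.Ioc M K, q ^ n ≤ q ^ (M + 1) * (1 - q)⁻¹ := by
  rcases Nat.lt_or_ge K (M+1) with h | h
  · rw [Finset.Ioc_eq_empty (by omega)]
    simp only [Finset.sum_empty]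
    exact mul_nonneg (pow_nonneg h0 _) (inv_nonneg.2 (by linarith))
  · rw [← Finset.Ico_add_one_add_one_eq_Ioc M K]
    have := geom_sum_Ico_le_of_lt_one h0 h1 (m := M+1) (n := K+1)
    rw [div_eq_mul_inv] at this
    exact this

end Aux

set_option maxHeartbeats 2000000 in
theorem stmt_9 (a β C : ℝ) (hβ : 0 < β) (hβa : β < a) (hC : 0 < C) :
    ∃ C' : ℝ, 0 < C' ∧
      ∀ (Y : Type) [NormedAddCommGroup Y] [NormedSpace ℝ Y] [CompleteSpace Y]
        (W : Set Y) (A : ℕ → Set Y), IsCompact W →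
        (∀ f ∈ W, ∃ g : ℕ → Y, (∀ n, 1 ≤ n → g n ∈ A n) ∧
          Tendsto (fun N => ∑ n ∈ Finset.Icc 1 N, g n) atTop (nhds f)) →
        (∀ n : ℕ, 1 ≤ n → ∀ j : ℕ,
          (j ≤ 2 ^ (n + 1) →
            entropyNum j (A n) ≤
              ENNReal.ofReal (C * (2 : ℝ) ^ (-(a * n)) * ((2 : ℝ) ^ n / ((j : ℝ) + 1)) ^ β)) ∧
          (2 ^ (n + 1) ≤ j →
            entropyNum j (A n) ≤
              ENNReal.ofReal (C * (2 : ℝ) ^ (-(a * n)) * (2 : ℝ) ^ (-(j : ℝ) / 2 ^ (n + 1))))) →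
        ∀ k : ℕ, 1 ≤ k → entropyNum k W ≤ ENNReal.ofReal (C' * (k : ℝ) ^ (-a)) := by
  classical
  have h2 : (1:ℝ) < 2 := one_lt_two
  obtain ⟨θ, hθdef⟩ : ∃ x : ℝ, x = (a - β) / (2 * β) := ⟨_, rfl⟩
  have hθ : 0 < θ := by rw [hθdef]; exact div_pos (by linarith) (by linarith)
  obtain ⟨q, hqdef⟩ : ∃ x : ℝ, x = (2:ℝ) ^ (β - a) := ⟨_, rfl⟩
  have hq0 : 0 < q := by rw [hqdef]; exact Real.rpow_pos_of_pos two_pos _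
  have hq1 : q < 1 := by rw [hqdef]; exact Real.rpow_lt_one_of_one_lt_of_neg h2 (by linarith)
  obtain ⟨q₁, hq₁def⟩ : ∃ x : ℝ, x = (2:ℝ) ^ (-θ) := ⟨_, rfl⟩
  have hq₁0 : 0 < q₁ := by rw [hq₁def]; exact Real.rpow_pos_of_pos two_pos _
  have hq₁1 : q₁ < 1 := by rw [hq₁def]; exact Real.rpow_lt_one_of_one_lt_of_neg h2 (by linarith)
  obtain ⟨q₂, hq₂def⟩ : ∃ x : ℝ, x = (2:ℝ) ^ (-((a - β) / 2)) := ⟨_, rfl⟩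
  have hq₂0 : 0 < q₂ := by rw [hq₂def]; exact Real.rpow_pos_of_pos two_pos _
  have hq₂1 : q₂ < 1 := by rw [hq₂def]; exact Real.rpow_lt_one_of_one_lt_of_neg h2 (by linarith)
  obtain ⟨A₁, hA₁def⟩ : ∃ x : ℕ, x = ⌈a + 1⌉₊ := ⟨_, rfl⟩
  have hA₁ : a + 1 ≤ (A₁ : ℝ) := by rw [hA₁def]; exact Nat.le_ceil _
  obtain ⟨D₀, hD₀def⟩ : ∃ x : ℕ, x = 4 + 4 * A₁ + ⌈(1 - q₁)⁻¹⌉₊ + ⌈θ⁻¹⌉₊ + 2 := ⟨_, rfl⟩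
  obtain ⟨D, hDdef⟩ : ∃ x : ℕ, x = 2 * D₀ := ⟨_, rfl⟩
  have hD0 : 0 < D := by rw [hDdef, hD₀def]; omega
  obtain ⟨C₃, hC₃def⟩ : ∃ x : ℝ, x = 2 * C * (2 + (1 - q₂)⁻¹ + 2 * (1 - q)⁻¹) := ⟨_, rfl⟩
  have hC₃ : 0 < C₃ := by
    have hx : (0:ℝ) < (1 - q₂)⁻¹ := inv_pos.2 (by linarith)
    have hy : (0:ℝ) < (1 - q)⁻¹ := inv_pos.2 (by linarith)
    rw [hC₃def]
    nlinarith
  have hD0' : (0:ℝ) < (D:ℝ) := by exact_mod_cast hD0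
  have hbase : (0:ℝ) < 2 * (D:ℝ) := by linarith
  have hCpos : 0 < C₃ * (2 * (D:ℝ)) ^ a := mul_pos hC₃ (Real.rpow_pos_of_pos hbase a)
  refine ⟨C₃ * (2 * (D:ℝ)) ^ a, hCpos, ?_⟩
  intro Y _ _ _ W A hWc hdec hA k hk
  -- The key covering claim
  have key : ∀ N : ℕ, ∃ T : Finset Y, T.card ≤ 2 ^ (D * (2 ^ N - 1)) ∧
      ∀ f ∈ W, ∃ y ∈ T, dist f y ≤ C₃ * (2:ℝ) ^ (-(a * (N:ℝ))) := by
    intro N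
    rcases Set.eq_empty_or_nonempty W with hWe | ⟨f0, hf0⟩
    · exact ⟨∅, by simp, by simp [hWe]⟩
    obtain ⟨g0, hg0A, hg0t⟩ := hdec f0 hf0
    obtain ⟨M, hMdef⟩ : ∃ x : ℕ, x = N + ⌈(N:ℝ) / θ⌉₊ := ⟨_, rfl⟩
    have hNM : N ≤ M := by rw [hMdef]; exact Nat.le_add_right _ _
    have tail_pt : ∀ n : ℕ, 1 ≤ n → ∀ x ∈ A n, ∀ x' ∈ A n, dist x x' ≤ 4 * (C * q ^ n) := by
      intro n hn x hx x' hx'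
      have hent := (hA n hn 0).1 (Nat.zero_le _)
      have hbq : C * (2:ℝ) ^ (-(a * (n:ℝ))) * ((2:ℝ) ^ n / (((0:ℕ):ℝ) + 1)) ^ β
          = C * q ^ n := by
        rw [Nat.cast_zero, zero_add, div_one,
          ← Real.rpow_natCast (2:ℝ) n, ← Real.rpow_mul (by norm_num : (0:ℝ) ≤ 2),
          mul_assoc, ← Real.rpow_add two_pos, hqdef,
          ← Real.rpow_natCast ((2:ℝ) ^ (β - a)) n, ← Real.rpow_mul (by norm_num : (0:ℝ) ≤ 2)]
        congr 1
        ring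
      have hbpos : (0:ℝ) < C * (2:ℝ) ^ (-(a * (n:ℝ))) * ((2:ℝ) ^ n / (((0:ℕ):ℝ) + 1)) ^ β := by
        rw [hbq]; positivity
      obtain ⟨T0, hT0c, hT0cov⟩ := exists_cover hbpos hent
      obtain ⟨y, hyT, hxy⟩ := hT0cov x hx
      obtain ⟨y', hyT', hxy'⟩ := hT0cov x' hx'
      have hyy : y = y' := by
        have hc1 : T0.card ≤ 1 := by simpa using hT0c
        exact Finset.card_le_one.1 hc1 y hyT y' hyT'
      subst hyy
      calc dist x x' ≤ dist x y + dist x' y := dist_triangle_right x x' y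
        _ ≤ 2 * (C * q ^ n) + 2 * (C * q ^ n) := by
            rw [← hbq]; exact add_le_add hxy hxy'
        _ = 4 * (C * q ^ n) := by ring
    obtain ⟨kk, hkkdef⟩ : ∃ x : ℕ → ℕ, x = fun n => if n ≤ N then 2 ^ (n+1) * (1 + A₁ * (N - n))
      else ⌈(2:ℝ) ^ ((N:ℝ) - θ * ((n:ℝ) - (N:ℝ)))⌉₊ := ⟨_, rfl⟩
    obtain ⟨ρ, hρdef⟩ : ∃ x : ℕ → ℝ, x = fun n =>
      if n ≤ N then C * ((2:ℝ) ^ (-(a * (N:ℝ))) * ((2:ℝ) ^ n * (2:ℝ) ^ (-(N:ℝ))))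
      else 2 * C * (2:ℝ) ^ (-(a * (N:ℝ))) * q₂ ^ (n - N) := ⟨_, rfl⟩
    have hβθ : β * θ = (a - β) / 2 := by
      rw [hθdef]; field_simp
    have hcovs : ∀ n ∈ Finset.Ioc 0 M, ∃ T : Finset Y, T.card ≤ 2 ^ kk n ∧
        ∀ x ∈ A n, ∃ y ∈ T, dist x y ≤ ρ n := by
      intro n hn
      rw [Finset.mem_Ioc] at hn
      have hn1 : 1 ≤ n := hn.1
      by_cases hnN : n ≤ N
      · -- low regime: exponential decay of entropy numbers
        have hkk : kk n = 2 ^ (n+1) * (1 + A₁ * (N - n)) := by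
          simp only [hkkdef]; rw [if_pos hnN]
        have h2n : 2 ^ (n+1) ≤ kk n := by
          rw [hkk]; exact Nat.le_mul_of_pos_right _ (by omega)
        have hent := (hA n hn1 (kk n)).2 h2n
        have hbpos : (0:ℝ) < C * (2:ℝ) ^ (-(a * (n:ℝ)))
            * (2:ℝ) ^ (-((kk n : ℕ):ℝ) / 2 ^ (n+1)) := by
          have h1 : (0:ℝ) < (2:ℝ) ^ (-(a * (n:ℝ))) := Real.rpow_pos_of_pos two_pos _
          have h2' : (0:ℝ) < (2:ℝ) ^ (-((kk n : ℕ):ℝ) / 2 ^ (n+1)) :=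
            Real.rpow_pos_of_pos two_pos _
          positivity
        obtain ⟨T', hT'c, hT'cov⟩ := exists_cover hbpos hent
        refine ⟨T', hT'c, fun x hx => ?_⟩
        obtain ⟨y, hy, hxy⟩ := hT'cov x hx
        refine ⟨y, hy, hxy.trans ?_⟩
        have hρn : ρ n = C * ((2:ℝ) ^ (-(a * (N:ℝ))) * ((2:ℝ) ^ n * (2:ℝ) ^ (-(N:ℝ)))) := by
          simp only [hρdef]; rw [if_pos hnN]
        rw [hρn]
        have hkcast : -((kk n : ℕ):ℝ) / 2 ^ (n+1) = -(1 + (A₁:ℝ) * ((N:ℝ) - (n:ℝ))) := by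
          rw [hkk]
          push_cast [Nat.cast_sub hnN]
          rw [div_eq_iff (by positivity : ((2:ℝ)^(n+1)) ≠ 0)]
          ring
        rw [hkcast]
        have hE : 2 * (C * (2:ℝ) ^ (-(a * (n:ℝ))) * (2:ℝ) ^ (-(1 + (A₁:ℝ) * ((N:ℝ) - (n:ℝ)))))
            = C * (2:ℝ) ^ (1 + -(a * (n:ℝ)) + -(1 + (A₁:ℝ) * ((N:ℝ) - (n:ℝ)))) := by
          rw [Real.rpow_add two_pos, Real.rpow_add two_pos, Real.rpow_one]
          ring
        have hE2 : C * ((2:ℝ) ^ (-(a * (N:ℝ))) * ((2:ℝ) ^ n * (2:ℝ) ^ (-(N:ℝ))))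
            = C * (2:ℝ) ^ (-(a * (N:ℝ)) + ((n:ℝ) + -(N:ℝ))) := by
          rw [Real.rpow_add two_pos, Real.rpow_add two_pos, Real.rpow_natCast]
        rw [hE, hE2]
        refine mul_le_mul_of_nonneg_left ?_ hC.le
        refine Real.rpow_le_rpow_of_exponent_le one_le_two ?_
        have hNn : (0:ℝ) ≤ (N:ℝ) - (n:ℝ) := sub_nonneg.2 (by exact_mod_cast hnN)
        nlinarith [mul_le_mul_of_nonneg_right hA₁ hNn]
      · -- middle regime: polynomial decay of entropy numbers
        push_neg at hnN
        have hkk : kk n = ⌈(2:ℝ) ^ ((N:ℝ) - θ * ((n:ℝ) - (N:ℝ)))⌉₊ := by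
          simp only [hkkdef]; rw [if_neg (by omega)]
        have hxpos : (0:ℝ) < (2:ℝ) ^ ((N:ℝ) - θ * ((n:ℝ) - (N:ℝ))) :=
          Real.rpow_pos_of_pos two_pos _
        have hkle : kk n ≤ 2 ^ (n+1) := by
          rw [hkk]
          refine Nat.ceil_le.2 ?_
          have hnn : (N:ℝ) ≤ (n:ℝ) := by exact_mod_cast hnN.le
          have h1 : (N:ℝ) - θ * ((n:ℝ) - (N:ℝ)) ≤ ((n:ℝ)) := by
            nlinarith [mul_nonneg hθ.le (sub_nonneg.2 hnn)]
          calc (2:ℝ) ^ ((N:ℝ) - θ * ((n:ℝ) - (N:ℝ))) ≤ (2:ℝ) ^ ((n:ℝ)) :=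
              Real.rpow_le_rpow_of_exponent_le one_le_two h1
            _ = (2:ℝ) ^ n := Real.rpow_natCast 2 n
            _ ≤ ((2 ^ (n+1) : ℕ) : ℝ) := by
                push_cast
                exact pow_le_pow_right₀ one_le_two (Nat.le_succ n)
        have hent := (hA n hn1 (kk n)).1 hkle
        have hbpos : (0:ℝ) < C * (2:ℝ) ^ (-(a * (n:ℝ)))
            * ((2:ℝ) ^ n / (((kk n : ℕ):ℝ) + 1)) ^ β := by
          have h1 : (0:ℝ) < (2:ℝ) ^ (-(a * (n:ℝ))) := Real.rpow_pos_of_pos two_pos _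
          have h2' : (0:ℝ) < ((2:ℝ) ^ n / (((kk n : ℕ):ℝ) + 1)) ^ β :=
            Real.rpow_pos_of_pos (by positivity) _
          positivity
        obtain ⟨T', hT'c, hT'cov⟩ := exists_cover hbpos hent
        refine ⟨T', hT'c, fun x hx => ?_⟩
        obtain ⟨y, hy, hxy⟩ := hT'cov x hx
        refine ⟨y, hy, hxy.trans ?_⟩
        have hρn : ρ n = 2 * C * (2:ℝ) ^ (-(a * (N:ℝ))) * q₂ ^ (n - N) := by
          simp only [hρdef]; rw [if_neg (by omega)]
        rw [hρn]
        have hkge : (2:ℝ) ^ ((N:ℝ) - θ * ((n:ℝ) - (N:ℝ))) ≤ ((kk n : ℕ):ℝ) + 1 := by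
          rw [hkk]
          have := Nat.le_ceil ((2:ℝ) ^ ((N:ℝ) - θ * ((n:ℝ) - (N:ℝ))))
          linarith
        have hdivle : (2:ℝ) ^ n / (((kk n : ℕ):ℝ) + 1)
            ≤ (2:ℝ) ^ ((n:ℝ) - ((N:ℝ) - θ * ((n:ℝ) - (N:ℝ)))) := by
          rw [Real.rpow_sub two_pos, Real.rpow_natCast]
          gcongr
        have hstep1 : ((2:ℝ) ^ n / (((kk n : ℕ):ℝ) + 1)) ^ β
            ≤ ((2:ℝ) ^ ((n:ℝ) - ((N:ℝ) - θ * ((n:ℝ) - (N:ℝ))))) ^ β :=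
          Real.rpow_le_rpow (by positivity) hdivle hβ.le
        calc 2 * (C * (2:ℝ) ^ (-(a * (n:ℝ))) * ((2:ℝ) ^ n / (((kk n : ℕ):ℝ) + 1)) ^ β)
            ≤ 2 * (C * (2:ℝ) ^ (-(a * (n:ℝ)))
                * ((2:ℝ) ^ ((n:ℝ) - ((N:ℝ) - θ * ((n:ℝ) - (N:ℝ))))) ^ β) := by
              have hpos : (0:ℝ) ≤ C * (2:ℝ) ^ (-(a * (n:ℝ))) := by positivity
              nlinarith [hstep1, hpos]
          _ = 2 * C * ((2:ℝ) ^ (-(a * (n:ℝ)))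
                * (2:ℝ) ^ (((n:ℝ) - ((N:ℝ) - θ * ((n:ℝ) - (N:ℝ)))) * β)) := by
              rw [← Real.rpow_mul (by norm_num : (0:ℝ) ≤ 2)]
              ring
          _ = 2 * C * (2:ℝ) ^ (-(a * (n:ℝ)) + ((n:ℝ) - ((N:ℝ) - θ * ((n:ℝ) - (N:ℝ)))) * β) := by
              rw [Real.rpow_add two_pos]
          _ = 2 * C * ((2:ℝ) ^ (-(a * (N:ℝ))) * (2:ℝ) ^ (-((a - β) / 2) * ((n:ℝ) - (N:ℝ)))) := by
              rw [← Real.rpow_add two_pos]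
              have hEE : -(a * (n:ℝ)) + ((n:ℝ) - ((N:ℝ) - θ * ((n:ℝ) - (N:ℝ)))) * β
                  = -(a * (N:ℝ)) + -((a - β) / 2) * ((n:ℝ) - (N:ℝ)) := by
                linear_combination ((n:ℝ) - (N:ℝ)) * hβθ
              rw [hEE]
          _ = 2 * C * (2:ℝ) ^ (-(a * (N:ℝ))) * q₂ ^ (n - N) := by
              rw [← Real.rpow_natCast q₂ (n - N), hq₂def,
                ← Real.rpow_mul (by norm_num : (0:ℝ) ≤ 2), Nat.cast_sub hnN.le]
              ring
      
    choose! T hTc hTcov using hcovs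
    set S : ℕ → Finset Y :=
      fun m => Nat.rec {0} (fun m Sm => Finset.image₂ (· + ·) Sm (T (m+1))) m with hSdef
    have hS0 : S 0 = {0} := rfl
    have hSsucc : ∀ m : ℕ, S (m+1) = Finset.image₂ (· + ·) (S m) (T (m+1)) := fun _ => rfl
    have hS : ∀ m, m ≤ M → (S m).card ≤ 2 ^ (∑ n ∈ Finset.Ioc 0 m, kk n) ∧
        ∀ g : ℕ → Y, (∀ n, 1 ≤ n → g n ∈ A n) →
          ∃ y ∈ S m, dist (∑ n ∈ Finset.Ioc 0 m, g n) y ≤ ∑ n ∈ Finset.Ioc 0 m, ρ n := by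
      intro m
      induction m with
      | zero =>
        intro _
        refine ⟨by simp [hS0], fun g _ => ⟨0, by simp [hS0], by simp⟩⟩
      | succ m ih =>
        intro hm
        obtain ⟨ihc, ihcov⟩ := ih (le_trans (Nat.le_succ m) hm)
        have hmem : m + 1 ∈ Finset.Ioc 0 M := Finset.mem_Ioc.2 ⟨Nat.succ_pos m, hm⟩
        constructor
        · rw [hSsucc]
          calc (Finset.image₂ (· + ·) (S m) (T (m+1))).card ≤ (S m).card * (T (m+1)).card :=
              Finset.card_image₂_le _ _ _
            _ ≤ 2 ^ (∑ n ∈ Finset.Ioc 0 m, kk n) * 2 ^ kk (m+1) :=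
              Nat.mul_le_mul ihc (hTc (m+1) hmem)
            _ = 2 ^ (∑ n ∈ Finset.Ioc 0 (m+1), kk n) := by
              rw [Finset.sum_Ioc_succ_top (Nat.zero_le m), pow_add]
        · intro g hg
          obtain ⟨y, hyS, hyd⟩ := ihcov g hg
          obtain ⟨t, htT, htd⟩ := hTcov (m+1) hmem (g (m+1)) (hg (m+1) (Nat.succ_pos m))
          refine ⟨y + t, ?_, ?_⟩
          · rw [hSsucc]; exact Finset.mem_image₂_of_mem hyS htT
          · rw [Finset.sum_Ioc_succ_top (Nat.zero_le m), Finset.sum_Ioc_succ_top (Nat.zero_le m)]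
            calc dist ((∑ n ∈ Finset.Ioc 0 m, g n) + g (m+1)) (y + t)
                ≤ dist (∑ n ∈ Finset.Ioc 0 m, g n) y + dist (g (m+1)) t :=
                  dist_add_add_le _ _ _ _
              _ ≤ (∑ n ∈ Finset.Ioc 0 m, ρ n) + ρ (m+1) := add_le_add hyd htd
    have htail : ∀ g : ℕ → Y, (∀ n, 1 ≤ n → g n ∈ A n) → ∀ f : Y,
        Tendsto (fun K => ∑ n ∈ Finset.Icc 1 K, g n) atTop (nhds f) →
        dist (f - ∑ n ∈ Finset.Ioc 0 M, g n) (f0 - ∑ n ∈ Finset.Ioc 0 M, g0 n)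
          ≤ 4 * C * (1 - q)⁻¹ * q ^ (M + 1) := by
      intro g hgA f hgt
      have hIcc : ∀ K : ℕ, Finset.Icc 1 K = Finset.Ioc 0 K := fun K => Finset.Icc_add_one_left_eq_Ioc 0 K
      have hd : Tendsto (fun K => ∑ n ∈ Finset.Ioc 0 K, (g n - g0 n)) atTop
          (nhds (f - f0)) := by
        have hsub := hgt.sub hg0t
        simp only [hIcc] at hsub
        simpa [Finset.sum_sub_distrib] using hsub
      have hlim : Tendsto
          (fun K => ‖(∑ n ∈ Finset.Ioc 0 K, (g n - g0 n)) - ∑ n ∈ Finset.Ioc 0 M, (g n - g0 n)‖)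
          atTop (nhds ‖(f - f0) - ∑ n ∈ Finset.Ioc 0 M, (g n - g0 n)‖) :=
        (hd.sub tendsto_const_nhds).norm
      have hev : ∀ᶠ K in atTop,
          ‖(∑ n ∈ Finset.Ioc 0 K, (g n - g0 n)) - ∑ n ∈ Finset.Ioc 0 M, (g n - g0 n)‖
            ≤ 4 * C * (1 - q)⁻¹ * q ^ (M + 1) := by
        refine eventually_atTop.2 ⟨M, fun K hK => ?_⟩
        have hsplit := Finset.sum_Ioc_consecutive (fun n => g n - g0 n) (Nat.zero_le M) hK
        have heq : (∑ n ∈ Finset.Ioc 0 K, (g n - g0 n)) - ∑ n ∈ Finset.Ioc 0 M, (g n - g0 n)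
            = ∑ n ∈ Finset.Ioc M K, (g n - g0 n) := by rw [← hsplit]; abel
        rw [heq]
        calc ‖∑ n ∈ Finset.Ioc M K, (g n - g0 n)‖ ≤ ∑ n ∈ Finset.Ioc M K, ‖g n - g0 n‖ :=
              norm_sum_le _ _
          _ ≤ ∑ n ∈ Finset.Ioc M K, (4 * C) * q ^ n := by
              refine Finset.sum_le_sum fun n hn => ?_
              rw [Finset.mem_Ioc] at hn
              rw [← dist_eq_norm]
              have := tail_pt n (by omega) _ (hgA n (by omega)) _ (hg0A n (by omega))
              linarith [this]
          _ = (4 * C) * ∑ n ∈ Finset.Ioc M K, q ^ n := by rw [Finset.mul_sum]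
          _ ≤ (4 * C) * (q ^ (M+1) * (1 - q)⁻¹) :=
              mul_le_mul_of_nonneg_left (geo_Ioc hq0.le hq1 M K) (by positivity)
          _ = 4 * C * (1 - q)⁻¹ * q ^ (M + 1) := by ring
      have hfin := le_of_tendsto hlim hev
      have heq2 : (f - ∑ n ∈ Finset.Ioc 0 M, g n) - (f0 - ∑ n ∈ Finset.Ioc 0 M, g0 n)
          = (f - f0) - ∑ n ∈ Finset.Ioc 0 M, (g n - g0 n) := by
        rw [Finset.sum_sub_distrib]; abel
      rw [dist_eq_norm, heq2]
      exact hfin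
    have hbudget : ∑ n ∈ Finset.Ioc 0 M, kk n ≤ D * (2 ^ N - 1) := by
      rcases Nat.eq_zero_or_pos N with hN0 | hN1
      · have hM0 : M = 0 := by rw [hMdef, hN0]; simp
        rw [hM0]
        simp
      · rw [← Finset.sum_Ioc_consecutive kk (Nat.zero_le N) hNM]
        have hlowb : ∑ n ∈ Finset.Ioc 0 N, kk n ≤ (4 + 4 * A₁) * 2 ^ N := by
          have heq : ∀ n ∈ Finset.Ioc 0 N, kk n = 2 * 2 ^ n + A₁ * ((N - n) * (2 * 2 ^ n)) := by
            intro n hn; rw [Finset.mem_Ioc] at hn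
            simp only [hkkdef]; rw [if_pos hn.2]; ring
          rw [Finset.sum_congr rfl heq, Finset.sum_add_distrib, ← Finset.mul_sum,
            ← Finset.mul_sum]
          have hsub : Finset.Ioc 0 N ⊆ Finset.range (N+1) := by
            intro x hx; simp only [Finset.mem_Ioc] at hx; simp only [Finset.mem_range]; omega
          have hp1 := two_pow_sum (N+1)
          have hp2 := sumNm N
          have hpow : (2:ℕ) ^ (N+1) = 2 * 2 ^ N := by ring
          have e1 : 2 * ∑ n ∈ Finset.Ioc 0 N, 2 ^ n ≤ 4 * 2 ^ N := by
            have h1 : ∑ n ∈ Finset.Ioc 0 N, 2 ^ n ≤ ∑ n ∈ Finset.range (N+1), 2 ^ n :=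
              Finset.sum_le_sum_of_subset hsub
            omega
          have e2 : ∑ n ∈ Finset.Ioc 0 N, (N - n) * (2 * 2 ^ n) ≤ 4 * 2 ^ N := by
            have ha : ∑ n ∈ Finset.Ioc 0 N, (N - n) * (2 * 2 ^ n)
                = 2 * ∑ n ∈ Finset.Ioc 0 N, (N - n) * 2 ^ n := by
              rw [Finset.mul_sum]; exact Finset.sum_congr rfl fun n _ => by ring
            have hb : ∑ n ∈ Finset.Ioc 0 N, (N - n) * 2 ^ n
                ≤ ∑ n ∈ Finset.range (N+1), (N - n) * 2 ^ n :=
              Finset.sum_le_sum_of_subset hsub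
            omega
          calc 2 * (∑ n ∈ Finset.Ioc 0 N, 2 ^ n)
              + A₁ * ∑ n ∈ Finset.Ioc 0 N, (N - n) * (2 * 2 ^ n)
              ≤ 4 * 2 ^ N + A₁ * (4 * 2 ^ N) := by
                exact Nat.add_le_add e1 (Nat.mul_le_mul_left A₁ e2)
            _ = (4 + 4 * A₁) * 2 ^ N := by ring
        have hmidb : ∑ n ∈ Finset.Ioc N M, kk n ≤ (⌈(1-q₁)⁻¹⌉₊ + ⌈θ⁻¹⌉₊ + 2) * 2 ^ N := by
          have hreal : ((∑ n ∈ Finset.Ioc N M, kk n : ℕ) : ℝ)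
              ≤ (((⌈(1-q₁)⁻¹⌉₊ + ⌈θ⁻¹⌉₊ + 2) * 2 ^ N : ℕ) : ℝ) := by
            have hterm : ∀ n ∈ Finset.Ioc N M, ((kk n : ℕ):ℝ) ≤ (2:ℝ) ^ N * q₁ ^ (n-N) + 1 := by
              intro n hn; rw [Finset.mem_Ioc] at hn
              simp only [hkkdef]; rw [if_neg (by omega)]
              have hxpos : (0:ℝ) ≤ (2:ℝ) ^ ((N:ℝ) - θ * ((n:ℝ) - (N:ℝ))) :=
                (Real.rpow_pos_of_pos two_pos _).le
              have h1 : (⌈(2:ℝ) ^ ((N:ℝ) - θ * ((n:ℝ) - (N:ℝ)))⌉₊ : ℝ)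
                  < (2:ℝ) ^ ((N:ℝ) - θ * ((n:ℝ) - (N:ℝ))) + 1 := Nat.ceil_lt_add_one hxpos
              have h2' : (2:ℝ) ^ ((N:ℝ) - θ * ((n:ℝ) - (N:ℝ))) = (2:ℝ) ^ N * q₁ ^ (n-N) := by
                rw [← Real.rpow_natCast (2:ℝ) N, ← Real.rpow_natCast q₁ (n-N), hq₁def,
                  ← Real.rpow_mul (by norm_num : (0:ℝ) ≤ 2), ← Real.rpow_add two_pos]
                congr 1
                rw [Nat.cast_sub hn.1.le]
                ring
              linarith
            have hgeo : ∑ n ∈ Finset.Ioc N M, q₁ ^ (n - N) ≤ (1 - q₁)⁻¹ := by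
              have heq2 : ∀ n ∈ Finset.Ioc N M, q₁ ^ (n - N) = q₁ ^ n * ((q₁ ^ N)⁻¹) := by
                intro n hn; rw [Finset.mem_Ioc] at hn
                rw [pow_sub₀ q₁ hq₁0.ne' hn.1.le]
              rw [Finset.sum_congr rfl heq2, ← Finset.sum_mul]
              have h1 : ∑ n ∈ Finset.Ioc N M, q₁ ^ n ≤ q₁ ^ (N+1) * (1-q₁)⁻¹ :=
                geo_Ioc hq₁0.le hq₁1 N M
              calc (∑ n ∈ Finset.Ioc N M, q₁ ^ n) * (q₁ ^ N)⁻¹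
                  ≤ (q₁ ^ (N+1) * (1-q₁)⁻¹) * (q₁ ^ N)⁻¹ :=
                    mul_le_mul_of_nonneg_right h1 (by positivity)
                _ = (q₁ ^ N * (q₁ ^ N)⁻¹) * (q₁ * (1-q₁)⁻¹) := by rw [pow_succ]; ring
                _ = q₁ * (1-q₁)⁻¹ := by
                    rw [mul_inv_cancel₀ (pow_ne_zero _ hq₁0.ne'), one_mul]
                _ ≤ 1 * (1-q₁)⁻¹ :=
                    mul_le_mul_of_nonneg_right hq₁1.le (inv_nonneg.2 (by linarith))
                _ = (1-q₁)⁻¹ := one_mul _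
            have hcard : ((Finset.Ioc N M).card : ℝ) ≤ (N:ℝ) * θ⁻¹ + 1 := by
              rw [Nat.card_Ioc]
              have hMN : M - N = ⌈(N:ℝ)/θ⌉₊ := by omega
              rw [hMN]
              have h1 : (⌈(N:ℝ)/θ⌉₊ : ℝ) < (N:ℝ)/θ + 1 :=
                Nat.ceil_lt_add_one (by positivity)
              have h2'' : (N:ℝ)/θ = (N:ℝ) * θ⁻¹ := div_eq_mul_inv _ _
              linarith
            have c1 : (1-q₁)⁻¹ ≤ (⌈(1-q₁)⁻¹⌉₊:ℝ) := Nat.le_ceil _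
            have c2 : θ⁻¹ ≤ (⌈θ⁻¹⌉₊:ℝ) := Nat.le_ceil _
            have c3 : (N:ℝ) ≤ (2:ℝ) ^ N := by exact_mod_cast (Nat.lt_two_pow_self (n := N)).le
            have c4 : (1:ℝ) ≤ (2:ℝ) ^ N := by exact_mod_cast Nat.one_le_two_pow (n := N)
            have hθinv : (0:ℝ) ≤ θ⁻¹ := inv_nonneg.2 hθ.le
            have h2N : (0:ℝ) ≤ (2:ℝ) ^ N := by positivity
            calc ((∑ n ∈ Finset.Ioc N M, kk n : ℕ) : ℝ)
                = ∑ n ∈ Finset.Ioc N M, ((kk n : ℕ):ℝ) := Nat.cast_sum _ _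
              _ ≤ ∑ n ∈ Finset.Ioc N M, ((2:ℝ) ^ N * q₁ ^ (n-N) + 1) :=
                  Finset.sum_le_sum hterm
              _ = (2:ℝ) ^ N * (∑ n ∈ Finset.Ioc N M, q₁ ^ (n-N))
                  + ((Finset.Ioc N M).card : ℝ) := by
                  rw [Finset.sum_add_distrib, ← Finset.mul_sum, Finset.sum_const,
                    nsmul_eq_mul, mul_one]
              _ ≤ (2:ℝ) ^ N * (1-q₁)⁻¹ + ((N:ℝ) * θ⁻¹ + 1) := by
                  have t0 : (2:ℝ) ^ N * (∑ n ∈ Finset.Ioc N M, q₁ ^ (n-N))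
                      ≤ (2:ℝ) ^ N * (1-q₁)⁻¹ := by
                    have := mul_le_mul_of_nonneg_right hgeo h2N
                    calc (2:ℝ) ^ N * (∑ n ∈ Finset.Ioc N M, q₁ ^ (n-N))
                        = (∑ n ∈ Finset.Ioc N M, q₁ ^ (n-N)) * (2:ℝ) ^ N := by ring
                      _ ≤ (1-q₁)⁻¹ * (2:ℝ) ^ N := this
                      _ = (2:ℝ) ^ N * (1-q₁)⁻¹ := by ring
                  linarith [hcard, t0]
              _ ≤ (2:ℝ) ^ N * (⌈(1-q₁)⁻¹⌉₊:ℝ)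
                  + ((2:ℝ) ^ N * (⌈θ⁻¹⌉₊:ℝ) + ((2:ℝ) ^ N + (2:ℝ) ^ N)) := by
                  have t1 : (2:ℝ) ^ N * (1-q₁)⁻¹ ≤ (2:ℝ) ^ N * (⌈(1-q₁)⁻¹⌉₊:ℝ) := by
                    have := mul_le_mul_of_nonneg_right c1 h2N
                    calc (2:ℝ) ^ N * (1-q₁)⁻¹ = (1-q₁)⁻¹ * (2:ℝ) ^ N := by ring
                      _ ≤ (⌈(1-q₁)⁻¹⌉₊:ℝ) * (2:ℝ) ^ N := this
                      _ = (2:ℝ) ^ N * (⌈(1-q₁)⁻¹⌉₊:ℝ) := by ring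
                  have t2 : (N:ℝ) * θ⁻¹ ≤ (2:ℝ) ^ N * (⌈θ⁻¹⌉₊:ℝ) :=
                    mul_le_mul c3 c2 hθinv h2N
                  linarith
              _ = (((⌈(1-q₁)⁻¹⌉₊ + ⌈θ⁻¹⌉₊ + 2) * 2 ^ N : ℕ) : ℝ) := by push_cast; ring
          exact_mod_cast hreal
        have htot : (4 + 4 * A₁) * 2 ^ N + (⌈(1-q₁)⁻¹⌉₊ + ⌈θ⁻¹⌉₊ + 2) * 2 ^ N
            ≤ D * (2 ^ N - 1) := by
          have hsum : (4 + 4 * A₁) * 2 ^ N + (⌈(1-q₁)⁻¹⌉₊ + ⌈θ⁻¹⌉₊ + 2) * 2 ^ N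
              = D₀ * 2 ^ N := by rw [hD₀def]; ring
          rw [hsum, hDdef]
          have h2N' : 2 ≤ 2 ^ N := by
            calc 2 = 2 ^ 1 := rfl
              _ ≤ 2 ^ N := Nat.pow_le_pow_right (by norm_num) hN1
          calc D₀ * 2 ^ N ≤ D₀ * (2 * (2 ^ N - 1)) := Nat.mul_le_mul_left D₀ (by omega)
            _ = 2 * D₀ * (2 ^ N - 1) := by ring
        exact le_trans (Nat.add_le_add hlowb hmidb) htot
    have hradius : (∑ n ∈ Finset.Ioc 0 M, ρ n) + 4 * C * (1 - q)⁻¹ * q ^ (M + 1)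
        ≤ C₃ * (2:ℝ) ^ (-(a * (N:ℝ))) := by
      obtain ⟨X, hXdef⟩ : ∃ x : ℝ, x = (2:ℝ) ^ (-(a * (N:ℝ))) := ⟨_, rfl⟩
      have hX0 : 0 < X := by rw [hXdef]; exact Real.rpow_pos_of_pos two_pos _
      rw [← hXdef, ← Finset.sum_Ioc_consecutive ρ (Nat.zero_le N) hNM]
      have hlow : ∑ n ∈ Finset.Ioc 0 N, ρ n ≤ 2 * C * X := by
        have heq : ∀ n ∈ Finset.Ioc 0 N, ρ n = (C * X * (2:ℝ) ^ (-(N:ℝ))) * (2:ℝ) ^ n := by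
          intro n hn; rw [Finset.mem_Ioc] at hn
          simp only [hρdef]; rw [if_pos hn.2, hXdef]; ring
        rw [Finset.sum_congr rfl heq, ← Finset.mul_sum]
        have hsum : ∑ n ∈ Finset.Ioc 0 N, (2:ℝ) ^ n ≤ 2 ^ (N+1) := by
          have hsub : Finset.Ioc 0 N ⊆ Finset.range (N+1) := by
            intro x hx; simp only [Finset.mem_Ioc] at hx; simp only [Finset.mem_range]; omega
          have h1 : ∑ n ∈ Finset.Ioc 0 N, (2:ℝ) ^ n ≤ ∑ n ∈ Finset.range (N+1), (2:ℝ) ^ n :=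
            Finset.sum_le_sum_of_subset_of_nonneg hsub (fun i _ _ => by positivity)
          have h2' : ∑ n ∈ Finset.range (N+1), (2:ℝ) ^ n = 2 ^ (N+1) - 1 := by
            rw [geom_sum_eq (by norm_num : (2:ℝ) ≠ 1)]; norm_num
          linarith
        have h3 : (2:ℝ) ^ (-(N:ℝ)) * 2 ^ (N+1) = 2 := by
          rw [← Real.rpow_natCast (2:ℝ) (N+1), ← Real.rpow_add two_pos]
          rw [show -(N:ℝ) + ((N:ℕ)+1 : ℕ) = 1 by push_cast; ring, Real.rpow_one]
        calc (C * X * (2:ℝ) ^ (-(N:ℝ))) * ∑ n ∈ Finset.Ioc 0 N, (2:ℝ) ^ n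
            ≤ (C * X * (2:ℝ) ^ (-(N:ℝ))) * 2 ^ (N+1) := by
              refine mul_le_mul_of_nonneg_left hsum ?_
              have : (0:ℝ) < (2:ℝ) ^ (-(N:ℝ)) := Real.rpow_pos_of_pos two_pos _
              positivity
          _ = C * X * ((2:ℝ) ^ (-(N:ℝ)) * 2 ^ (N+1)) := by ring
          _ = 2 * C * X := by rw [h3]; ring
      have hmid : ∑ n ∈ Finset.Ioc N M, ρ n ≤ 2 * C * X * (1 - q₂)⁻¹ := by
        have heq : ∀ n ∈ Finset.Ioc N M, ρ n = (2 * C * X) * q₂ ^ (n - N) := by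
          intro n hn; rw [Finset.mem_Ioc] at hn
          simp only [hρdef]; rw [if_neg (by omega), hXdef]
        rw [Finset.sum_congr rfl heq, ← Finset.mul_sum]
        have hsum : ∑ n ∈ Finset.Ioc N M, q₂ ^ (n - N) ≤ (1 - q₂)⁻¹ := by
          have heq2 : ∀ n ∈ Finset.Ioc N M, q₂ ^ (n - N) = q₂ ^ n * ((q₂ ^ N)⁻¹) := by
            intro n hn; rw [Finset.mem_Ioc] at hn
            rw [pow_sub₀ q₂ hq₂0.ne' hn.1.le]
          rw [Finset.sum_congr rfl heq2, ← Finset.sum_mul]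
          have h1 : ∑ n ∈ Finset.Ioc N M, q₂ ^ n ≤ q₂ ^ (N+1) * (1-q₂)⁻¹ :=
            geo_Ioc hq₂0.le hq₂1 N M
          calc (∑ n ∈ Finset.Ioc N M, q₂ ^ n) * (q₂ ^ N)⁻¹
              ≤ (q₂ ^ (N+1) * (1-q₂)⁻¹) * (q₂ ^ N)⁻¹ := by
                refine mul_le_mul_of_nonneg_right h1 (by positivity)
            _ = (q₂ ^ N * (q₂ ^ N)⁻¹) * (q₂ * (1-q₂)⁻¹) := by rw [pow_succ]; ring
            _ = q₂ * (1-q₂)⁻¹ := by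
                rw [mul_inv_cancel₀ (pow_ne_zero _ hq₂0.ne'), one_mul]
            _ ≤ 1 * (1-q₂)⁻¹ :=
                mul_le_mul_of_nonneg_right hq₂1.le (inv_nonneg.2 (by linarith))
            _ = (1-q₂)⁻¹ := one_mul _
        calc (2 * C * X) * ∑ n ∈ Finset.Ioc N M, q₂ ^ (n - N)
            ≤ (2 * C * X) * (1 - q₂)⁻¹ := mul_le_mul_of_nonneg_left hsum (by positivity)
          _ = 2 * C * X * (1 - q₂)⁻¹ := by ring
      have htailb : 4 * C * (1 - q)⁻¹ * q ^ (M + 1) ≤ 4 * C * (1 - q)⁻¹ * X := by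
        refine mul_le_mul_of_nonneg_left ?_ ?_
        · -- q ^ (M+1) ≤ X
          have h1 : q ^ (M+1) = (2:ℝ) ^ ((β - a) * (((M:ℕ):ℝ)+1)) := by
            rw [hqdef, ← Real.rpow_natCast ((2:ℝ) ^ (β-a)) (M+1),
              ← Real.rpow_mul (by norm_num : (0:ℝ) ≤ 2)]
            congr 1
            push_cast
            ring
          rw [h1, hXdef]
          refine Real.rpow_le_rpow_of_exponent_le one_le_two ?_
          have hceil : (N:ℝ)/θ ≤ (⌈(N:ℝ)/θ⌉₊ : ℝ) := Nat.le_ceil _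
          have hMge : (N:ℝ) + (N:ℝ)/θ ≤ (M:ℝ) := by rw [hMdef]; push_cast; linarith
          have hθ2β : θ * (2 * β) = a - β := by rw [hθdef]; field_simp
          have hdivθ : (a - β) * θ⁻¹ = 2 * β := by
            rw [← hθ2β]; field_simp
          have e1 : (a-β) * ((N:ℝ) + (N:ℝ)/θ) ≤ (a-β) * (M:ℝ) :=
            mul_le_mul_of_nonneg_left hMge (by linarith)
          have e2 : (a-β) * ((N:ℝ)/θ) = 2 * β * (N:ℝ) := by
            calc (a-β) * ((N:ℝ)/θ) = ((a-β) * θ⁻¹) * (N:ℝ) := by ring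
              _ = 2 * β * (N:ℝ) := by rw [hdivθ]
          have hN0 : (0:ℝ) ≤ (N:ℝ) := Nat.cast_nonneg N
          nlinarith [e1, e2]
        · have : (0:ℝ) ≤ (1 - q)⁻¹ := inv_nonneg.2 (by linarith)
          positivity
      have hCX : (0:ℝ) ≤ C * X := by positivity
      have hiq : (0:ℝ) ≤ (1 - q)⁻¹ := inv_nonneg.2 (by linarith)
      have hiq2 : (0:ℝ) ≤ (1 - q₂)⁻¹ := inv_nonneg.2 (by linarith)
      rw [hC₃def]
      have hexp2 : 2 * C * (2 + (1 - q₂)⁻¹ + 2 * (1 - q)⁻¹) * X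
          = 2*C*X + (2*C*X + 2*C*X*(1-q₂)⁻¹ + 4*C*(1-q)⁻¹*X) := by ring
      rw [hexp2]
      linarith [hlow, hmid, htailb, hCX]
    obtain ⟨hScard, hScov⟩ := hS M le_rfl
    refine ⟨(S M).image (fun y => y + (f0 - ∑ n ∈ Finset.Ioc 0 M, g0 n)), ?_, ?_⟩
    · exact le_trans Finset.card_image_le
        (le_trans hScard (Nat.pow_le_pow_right (by norm_num) hbudget))
    · intro f hf
      obtain ⟨g, hgA, hgt⟩ := hdec f hf
      obtain ⟨y, hyS, hyd⟩ := hScov g hgA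
      refine ⟨y + (f0 - ∑ n ∈ Finset.Ioc 0 M, g0 n), Finset.mem_image_of_mem _ hyS, ?_⟩
      have hsplit : f = (∑ n ∈ Finset.Ioc 0 M, g n) + (f - ∑ n ∈ Finset.Ioc 0 M, g n) := by
        abel
      calc dist f (y + (f0 - ∑ n ∈ Finset.Ioc 0 M, g0 n))
          = dist ((∑ n ∈ Finset.Ioc 0 M, g n) + (f - ∑ n ∈ Finset.Ioc 0 M, g n))
              (y + (f0 - ∑ n ∈ Finset.Ioc 0 M, g0 n)) := by rw [← hsplit]
        _ ≤ dist (∑ n ∈ Finset.Ioc 0 M, g n) y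
            + dist (f - ∑ n ∈ Finset.Ioc 0 M, g n) (f0 - ∑ n ∈ Finset.Ioc 0 M, g0 n) :=
            dist_add_add_le _ _ _ _
        _ ≤ (∑ n ∈ Finset.Ioc 0 M, ρ n) + 4 * C * (1 - q)⁻¹ * q ^ (M + 1) :=
            add_le_add hyd (htail g hgA f hgt)
        _ ≤ C₃ * (2:ℝ) ^ (-(a * (N:ℝ))) := hradius
  -- Conclusion
  obtain ⟨N, hexp, hkD⟩ : ∃ N : ℕ, D * (2 ^ N - 1) ≤ k ∧ (k:ℝ) ≤ 2 * (D:ℝ) * 2 ^ N := by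
    refine ⟨Nat.log 2 (k / D + 1), ?_, ?_⟩
    · have h1 : 2 ^ Nat.log 2 (k / D + 1) ≤ k / D + 1 := Nat.pow_log_le_self 2 (Nat.succ_ne_zero _)
      calc D * (2 ^ Nat.log 2 (k / D + 1) - 1) ≤ D * (k / D) :=
            Nat.mul_le_mul_left _ (Nat.sub_le_iff_le_add.2 h1)
        _ = (k / D) * D := Nat.mul_comm _ _
        _ ≤ k := Nat.div_mul_le_self k D
    · have h2' : k / D + 1 < 2 ^ (Nat.log 2 (k / D + 1) + 1) :=
        Nat.lt_pow_succ_log_self (by norm_num) _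
      have h3 : k < 2 ^ (Nat.log 2 (k / D + 1) + 1) * D := (Nat.div_lt_iff_lt_mul hD0).1 (Nat.lt_of_succ_lt h2')
      have h4 : (k:ℝ) < ((2 ^ (Nat.log 2 (k / D + 1) + 1) * D : ℕ) : ℝ) := by exact_mod_cast h3
      have h5 : ((2 ^ (Nat.log 2 (k / D + 1) + 1) * D : ℕ) : ℝ)
          = 2 * (D:ℝ) * 2 ^ Nat.log 2 (k / D + 1) := by push_cast; ring
      rw [h5] at h4
      exact h4.le
  obtain ⟨T, hTc, hTcov⟩ := key N
  have hkpos : (0:ℝ) < (k:ℝ) := by exact_mod_cast hk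
  have hkapos : (0:ℝ) < (k:ℝ) ^ a := Real.rpow_pos_of_pos hkpos _
  have hkey2 : (2:ℝ) ^ (-(a * (N:ℝ))) ≤ (2 * (D:ℝ)) ^ a * (k:ℝ) ^ (-a) := by
    have hka : (k:ℝ) ^ a ≤ (2 * (D:ℝ)) ^ a * (2:ℝ) ^ ((N:ℝ) * a) := by
      have h6 : (k:ℝ) ^ a ≤ (2 * (D:ℝ) * 2 ^ N) ^ a :=
        Real.rpow_le_rpow hkpos.le hkD (by linarith)
      have h7 : (2 * (D:ℝ) * 2 ^ N) ^ a = (2 * (D:ℝ)) ^ a * (2:ℝ) ^ ((N:ℝ) * a) := by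
        rw [Real.mul_rpow (by positivity) (by positivity)]
        congr 1
        rw [← Real.rpow_natCast (2:ℝ) N, ← Real.rpow_mul (by norm_num)]
      rw [h7] at h6
      exact h6
    have h8 : (2:ℝ) ^ (-(a * (N:ℝ))) * (k:ℝ) ^ a ≤ (2 * (D:ℝ)) ^ a := by
      calc (2:ℝ) ^ (-(a * (N:ℝ))) * (k:ℝ) ^ a
          ≤ (2:ℝ) ^ (-(a * (N:ℝ))) * ((2 * (D:ℝ)) ^ a * (2:ℝ) ^ ((N:ℝ) * a)) :=
            mul_le_mul_of_nonneg_left hka (by positivity)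
        _ = (2 * (D:ℝ)) ^ a * ((2:ℝ) ^ (-(a * (N:ℝ))) * (2:ℝ) ^ ((N:ℝ) * a)) := by ring
        _ = (2 * (D:ℝ)) ^ a := by
            rw [← Real.rpow_add two_pos, show -(a * (N:ℝ)) + (N:ℝ) * a = 0 by ring,
              Real.rpow_zero, mul_one]
    rw [Real.rpow_neg hkpos.le]
    calc (2:ℝ) ^ (-(a * (N:ℝ)))
        = ((2:ℝ) ^ (-(a * (N:ℝ))) * (k:ℝ) ^ a) * ((k:ℝ) ^ a)⁻¹ := by
          field_simp
      _ ≤ (2 * (D:ℝ)) ^ a * ((k:ℝ) ^ a)⁻¹ :=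
          mul_le_mul_of_nonneg_right h8 (by positivity)
  refine entropyNum_le' (by positivity) ⟨T, le_trans hTc (Nat.pow_le_pow_right (by norm_num) hexp), fun f hf => ?_⟩
  obtain ⟨y, hyT, hyd⟩ := hTcov f hf
  refine ⟨y, hyT, hyd.trans ?_⟩
  calc C₃ * (2:ℝ) ^ (-(a * (N:ℝ))) ≤ C₃ * ((2 * (D:ℝ)) ^ a * (k:ℝ) ^ (-a)) :=
        mul_le_mul_of_nonneg_left hkey2 hC₃.le
    _ = C₃ * (2 * (D:ℝ)) ^ a * (k:ℝ) ^ (-a) := by ring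
end

section
/- (Nikol'skii inequality for trigonometric polynomials, 1 → ∞) Let t be a trigonometric polynomial on 𝕋 of degree at most n (n ≥ 1). Then ‖t‖_{L_∞(𝕋)} ≤ C n ‖t‖_{L_1(𝕋)} for an absolute constant C, where the L_1 norm uses the normalized measure (2π)^{-1}dx. -/
open Real

lemma exp_int_integral (m : ℤ) :
    (∫ y in (0:ℝ)..(2*π), Complex.exp ((m:ℂ) * y * Complex.I)) =
      if m = 0 then (2*π : ℂ) else 0 := by
  split_ifs with h
  · simp [h, mul_comm]
  · have hc : (m : ℂ) * Complex.I ≠ 0 := by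
      simp [Complex.I_ne_zero, Complex.ofReal_ne_zero, h]
    have key := integral_exp_mul_complex (a := (0:ℝ)) (b := 2*π) hc
    have h1 : ∀ y : ℝ, (m:ℂ) * y * Complex.I = ((m:ℂ) * Complex.I) * y := by
      intro y; ring
    simp only [h1]
    rw [key]
    have h2 : (m:ℂ) * Complex.I * ((2*π:ℝ):ℂ) = (m:ℂ) * (2 * (π:ℂ) * Complex.I) := by
      push_cast; ring
    rw [h2, Complex.exp_int_mul_two_pi_mul_I]
    simp

lemma cont_trig (S : Finset ℤ) (c : ℤ → ℂ) :
    Continuous fun y : ℝ => ∑ k ∈ S, c k * Complex.exp ((k : ℂ) * y * Complex.I) := by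
  apply continuous_finset_sum
  intro k _
  exact continuous_const.mul (Complex.continuous_exp.comp
    ((continuous_const.mul Complex.continuous_ofReal).mul continuous_const))

lemma coeff_eq (n : ℕ) (c : ℤ → ℂ) (j : ℤ) (hj : j ∈ Finset.Icc (-(n:ℤ)) (n:ℤ)) :
    (∫ y in (0:ℝ)..(2*π),
        (∑ k ∈ Finset.Icc (-(n:ℤ)) (n:ℤ), c k * Complex.exp ((k : ℂ) * y * Complex.I))
          * Complex.exp ((-j : ℂ) * y * Complex.I)) = c j * (2*π) := by
  have hterm : ∀ k : ℤ, ∀ y : ℝ,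
      c k * Complex.exp ((k : ℂ) * y * Complex.I) * Complex.exp ((-j : ℂ) * y * Complex.I)
        = c k * Complex.exp (((k - j : ℤ) : ℂ) * y * Complex.I) := by
    intro k y
    rw [mul_assoc, ← Complex.exp_add]
    push_cast
    ring_nf
  have : ∀ y : ℝ,
      (∑ k ∈ Finset.Icc (-(n:ℤ)) (n:ℤ), c k * Complex.exp ((k : ℂ) * y * Complex.I))
          * Complex.exp ((-j : ℂ) * y * Complex.I)
      = ∑ k ∈ Finset.Icc (-(n:ℤ)) (n:ℤ), c k * Complex.exp (((k - j : ℤ) : ℂ) * y * Complex.I) := by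
    intro y
    rw [Finset.sum_mul]
    exact Finset.sum_congr rfl fun k _ => hterm k y
  simp only [this]
  rw [intervalIntegral.integral_finset_sum]
  · have : ∀ k ∈ Finset.Icc (-(n:ℤ)) (n:ℤ),
        (∫ y in (0:ℝ)..(2*π), c k * Complex.exp (((k - j : ℤ) : ℂ) * y * Complex.I))
        = c k * (if k - j = 0 then (2*π : ℂ) else 0) := by
      intro k _
      rw [intervalIntegral.integral_const_mul, exp_int_integral]
    rw [Finset.sum_congr rfl this, Finset.sum_eq_single j]
    · simp
    · intro k _ hk
      simp [sub_eq_zero, hk]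
    · intro h; exact absurd hj h
  · intro k _
    apply Continuous.intervalIntegrable
    exact continuous_const.mul (Complex.continuous_exp.comp
      ((continuous_const.mul Complex.continuous_ofReal).mul continuous_const))

theorem stmt_15 :
    ∃ C : ℝ, 0 < C ∧ ∀ n : ℕ, 1 ≤ n → ∀ c : ℤ → ℂ, ∀ x : ℝ,
      ‖∑ k ∈ Finset.Icc (-(n : ℤ)) (n : ℤ), c k * Complex.exp ((k : ℂ) * x * Complex.I)‖ ≤
        C * n * ((2 * π)⁻¹ * ∫ y in (0 : ℝ)..(2 * π),
          ‖∑ k ∈ Finset.Icc (-(n : ℤ)) (n : ℤ), c k * Complex.exp ((k : ℂ) * y * Complex.I)‖) := by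
  refine ⟨3, by norm_num, ?_⟩
  intro n hn c x
  set S := Finset.Icc (-(n:ℤ)) (n:ℤ) with hS
  set t : ℝ → ℂ := fun y => ∑ k ∈ S, c k * Complex.exp ((k : ℂ) * y * Complex.I) with ht
  set M : ℝ := (2 * π)⁻¹ * ∫ y in (0:ℝ)..(2*π), ‖t y‖ with hM
  have hπ : (0:ℝ) < 2 * π := by positivity
  have hcont : Continuous t := cont_trig S c
  have hM0 : 0 ≤ M := by
    apply mul_nonneg (by positivity)
    apply intervalIntegral.integral_nonneg (le_of_lt hπ)
    intro y _; exact norm_nonneg _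
  have hcoef : ∀ j ∈ S, ‖c j‖ ≤ M := by
    intro j hj
    have hint : ∫ y in (0:ℝ)..(2*π), t y * Complex.exp ((-j : ℂ) * y * Complex.I)
        = c j * (2*π) := coeff_eq n c j hj
    have hnorm : ‖c j * (2*π : ℂ)‖ ≤ ∫ y in (0:ℝ)..(2*π), ‖t y‖ := by
      rw [← hint]
      calc ‖∫ y in (0:ℝ)..(2*π), t y * Complex.exp ((-j : ℂ) * y * Complex.I)‖
          ≤ ∫ y in (0:ℝ)..(2*π), ‖t y * Complex.exp ((-j : ℂ) * y * Complex.I)‖ :=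
            intervalIntegral.norm_integral_le_integral_norm (le_of_lt hπ)
        _ = ∫ y in (0:ℝ)..(2*π), ‖t y‖ := by
            congr 1; funext y
            rw [norm_mul]
            have : ‖Complex.exp ((-j : ℂ) * y * Complex.I)‖ = 1 := by
              rw [Complex.norm_exp]
              simp
            rw [this, mul_one]
    have : ‖c j * (2*π : ℂ)‖ = ‖c j‖ * (2*π) := by
      rw [norm_mul]
      congr 1
      have : ((2*π : ℝ) : ℂ) = (2*π : ℂ) := by push_cast; ring
      rw [← this, Complex.norm_real, Real.norm_eq_abs, abs_of_pos hπ]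
    rw [this] at hnorm
    rw [hM]
    rw [← le_div_iff₀ hπ] at hnorm
    calc ‖c j‖ ≤ (∫ y in (0:ℝ)..(2*π), ‖t y‖) / (2*π) := hnorm
      _ = (2*π)⁻¹ * ∫ y in (0:ℝ)..(2*π), ‖t y‖ := by ring
  calc ‖t x‖ ≤ ∑ k ∈ S, ‖c k * Complex.exp ((k : ℂ) * x * Complex.I)‖ :=
        norm_sum_le _ _
    _ = ∑ k ∈ S, ‖c k‖ := by
        apply Finset.sum_congr rfl
        intro k _
        rw [norm_mul]
        have : ‖Complex.exp ((k : ℂ) * x * Complex.I)‖ = 1 := by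
          rw [Complex.norm_exp]
          simp
        rw [this, mul_one]
    _ ≤ ∑ _k ∈ S, M := Finset.sum_le_sum hcoef
    _ = (S.card : ℝ) * M := by rw [Finset.sum_const, nsmul_eq_mul]
    _ ≤ 3 * n * M := by
        apply mul_le_mul_of_nonneg_right _ hM0
        have hcard : S.card = 2 * n + 1 := by
          rw [hS, Int.card_Icc]
          simp
          omega
        rw [hcard]
        push_cast
        have : (1:ℝ) ≤ n := by exact_mod_cast hn
        linarith
end
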